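/- arXiv:1905.03215 — 2 statements merged into one kernel-verified Lean document; each statement's English description precedes it below -/
import Mathlib

section
/- For every finitely supported c : ℤ[i] → ℂ and every integer q ≥ 1 one has S'_q = (1/q)·Σ_{a mod q} |Σ_{z = u+iv ∈ ℤ[i], gcd(v,q)=1} c(z)·e(a·u·v*/q)|², where v* denotes the multiplicative inverse of v modulo q; in particular S'_q is real and nonnegative. Moreover, if c is supported on primitive Gaussian integers z = u + iv with gcd(u,v) = 1 and v ≠ 0, then S'_q ≤ S_q. -/
open scoped ComplexConjugate
open scoped Classical

noncomputable section

/-- `z = u+iv` is *odd primitive*: `u ≢ v (mod 2)`, `gcd(u,v) = 1`, `uv ≠ 0`. -/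
def OddPrimitive (z : GaussianInt) : Prop :=
  ¬ z.re ≡ z.im [ZMOD 2] ∧ Int.gcd z.re z.im = 1 ∧ z.re * z.im ≠ 0

/-- The determinant sum `S_q = ∑_{u₁v₂ ≡ u₂v₁ (mod q)} c(z₁) conj (c(z₂))`. -/
def detSum (c : GaussianInt → ℂ) (q : ℕ) : ℂ :=
  ∑ᶠ z₁ : GaussianInt, ∑ᶠ z₂ : GaussianInt,
    if (q : ℤ) ∣ (z₁.re * z₂.im - z₂.re * z₁.im) then c z₁ * conj (c z₂) else 0

/-- The reduced determinant sum `S'_q`, with the extra condition `gcd(v₁v₂, q) = 1`. -/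
def detSum' (c : GaussianInt → ℂ) (q : ℕ) : ℂ :=
  ∑ᶠ z₁ : GaussianInt, ∑ᶠ z₂ : GaussianInt,
    if (q : ℤ) ∣ (z₁.re * z₂.im - z₂.re * z₁.im) ∧ Int.gcd (z₁.im * z₂.im) q = 1
    then c z₁ * conj (c z₂) else 0

/-- `S(Q,X) = ∑_{1 ≤ q ≤ Q} S_q` (the dependence on `X` is through the support of `c`). -/
def SQX (c : GaussianInt → ℂ) (Q : ℝ) : ℂ :=
  ∑ q ∈ Finset.Icc 1 ⌊Q⌋₊, detSum c q

/-- `c` is supported on odd primitive Gaussian integers `z` with `1 < |z|² ≤ X`. -/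
def SuppOK (c : GaussianInt → ℂ) (X : ℝ) : Prop :=
  ∀ z : GaussianInt, c z ≠ 0 →
    OddPrimitive z ∧ 1 < (Zsqrtd.norm z : ℝ) ∧ (Zsqrtd.norm z : ℝ) ≤ X

/-- The Siegel–Walfisz condition with exponent `B` and constant `K`. -/
def SWCond (c : GaussianInt → ℂ) (X B K : ℝ) : Prop :=
  ∀ (k ℓ : ℕ), 1 ≤ ℓ → ∀ (α : GaussianInt) (t : ℝ),
    ‖∑ᶠ z : GaussianInt,
        if z ≠ 0 ∧ (ℓ : GaussianInt) ∣ (z - α) then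
          c z * (conj (GaussianInt.toComplex z) / GaussianInt.toComplex z) ^ k *
            (‖GaussianInt.toComplex z‖ : ℂ) ^ ((t : ℂ) * Complex.I)
        else 0‖
      ≤ K * (ℓ : ℝ) ^ 2 * ((k : ℝ) ^ 2 + 1) * (t ^ 2 + 1) * X * Real.log X ^ (-B)

/-- The additive character `x ↦ e(x/q)` on `ℤ/qℤ`. -/
def eChar (q : ℕ) (x : ZMod q) : ℂ :=
  Complex.exp (2 * Real.pi * Complex.I * ((x.val : ℂ) / (q : ℂ)))

lemma exp_period {q : ℕ} (hq : q ≠ 0) (r k : ℕ) :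
    Complex.exp (2 * Real.pi * Complex.I * (((r + q * k : ℕ) : ℂ) / q)) =
    Complex.exp (2 * Real.pi * Complex.I * ((r : ℂ) / q)) := by
  have hq' : (q : ℂ) ≠ 0 := Nat.cast_ne_zero.mpr hq
  rw [show (2 * Real.pi * Complex.I * (((r + q * k : ℕ) : ℂ) / q))
      = 2 * Real.pi * Complex.I * ((r : ℂ) / q) + (k : ℤ) * (2 * Real.pi * Complex.I) by
    push_cast; field_simp]
  rw [Complex.exp_add, Complex.exp_int_mul_two_pi_mul_I, mul_one]

lemma exp_nat_congr {q : ℕ} (hq : q ≠ 0) {a b : ℕ} (h : a % q = b % q) :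
    Complex.exp (2 * Real.pi * Complex.I * ((a : ℂ) / q)) =
    Complex.exp (2 * Real.pi * Complex.I * ((b : ℂ) / q)) := by
  have key : ∀ n : ℕ, Complex.exp (2 * Real.pi * Complex.I * ((n : ℂ) / q)) =
      Complex.exp (2 * Real.pi * Complex.I * (((n % q : ℕ) : ℂ) / q)) := by
    intro n
    conv_lhs => rw [← Nat.mod_add_div n q]
    exact exp_period hq _ _
  rw [key a, key b, h]

lemma eChar_zero (q : ℕ) : eChar q 0 = 1 := by
  simp [eChar]

lemma eChar_add {q : ℕ} (hq : q ≠ 0) (x y : ZMod q) :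
    eChar q (x + y) = eChar q x * eChar q y := by
  haveI : NeZero q := ⟨hq⟩
  unfold eChar
  rw [← Complex.exp_add]
  have h1 : (x + y).val % q = (x.val + y.val) % q := by
    rw [ZMod.val_add, Nat.mod_mod_of_dvd _ dvd_rfl]
  calc Complex.exp (2 * Real.pi * Complex.I * (((x + y).val : ℂ) / q))
      = Complex.exp (2 * Real.pi * Complex.I * (((x.val + y.val : ℕ) : ℂ) / q)) :=
        exp_nat_congr hq h1
    _ = Complex.exp (2 * Real.pi * Complex.I * ((x.val : ℂ) / q)
          + 2 * Real.pi * Complex.I * ((y.val : ℂ) / q)) := by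
        congr 1
        push_cast
        ring

lemma eChar_pow {q : ℕ} (hq : q ≠ 0) (m : ZMod q) (a : ℕ) :
    eChar q ((a : ZMod q) * m) = (eChar q m) ^ a := by
  induction a with
  | zero => simp [eChar_zero]
  | succ n ih =>
      have : ((n + 1 : ℕ) : ZMod q) * m = (n : ZMod q) * m + m := by push_cast; ring
      rw [this, eChar_add hq, ih, pow_succ]

lemma eChar_ne_one {q : ℕ} (hq : q ≠ 0) {m : ZMod q} (hm : m ≠ 0) : eChar q m ≠ 1 := by
  haveI : NeZero q := ⟨hq⟩
  intro h
  unfold eChar at h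
  rw [Complex.exp_eq_one_iff] at h
  obtain ⟨n, hn⟩ := h
  have h2pi : (2 * (Real.pi : ℂ) * Complex.I) ≠ 0 := Complex.two_pi_I_ne_zero
  have h2 : ((m.val : ℂ) / q) = (n : ℂ) := by
    apply mul_left_cancel₀ h2pi
    rw [hn]; ring
  have hqR : (0 : ℝ) < q := by exact_mod_cast Nat.pos_of_ne_zero hq
  have hvpos : 0 < m.val := Nat.pos_of_ne_zero (fun h0 => hm ((ZMod.val_eq_zero m).mp h0))
  have hvlt : m.val < q := ZMod.val_lt m
  have h2' : ((m.val : ℝ) / q) = (n : ℝ) := by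
    have h2c : (((m.val : ℝ) / q : ℝ) : ℂ) = ((n : ℝ) : ℂ) := by push_cast; exact_mod_cast h2
    exact_mod_cast h2c
  have h3 : (0:ℝ) < (n:ℝ) := by
    rw [← h2']; positivity
  have h4 : (n:ℝ) < 1 := by
    rw [← h2']
    rw [div_lt_one hqR]
    exact_mod_cast hvlt
  have : (0:ℤ) < n := by exact_mod_cast h3
  have : (n:ℤ) < 1 := by exact_mod_cast h4
  omega

lemma eChar_neg {q : ℕ} (hq : q ≠ 0) (x : ZMod q) :
    eChar q (-x) = (eChar q x)⁻¹ := by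
  apply eq_inv_of_mul_eq_one_left
  rw [← eChar_add hq, neg_add_cancel, eChar_zero]

lemma conj_eChar {q : ℕ} (hq : q ≠ 0) (x : ZMod q) :
    conj (eChar q x) = eChar q (-x) := by
  rw [eChar_neg hq]
  have habs : ‖eChar q x‖ = 1 := by
    unfold eChar
    rw [show (2 * (Real.pi:ℂ) * Complex.I * ((x.val : ℂ) / q))
        = ((2 * Real.pi * (x.val / q) : ℝ) : ℂ) * Complex.I by push_cast; ring]
    exact Complex.norm_exp_ofReal_mul_I _
  rw [← Complex.inv_eq_conj habs]

lemma eChar_pow_card {q : ℕ} (hq : q ≠ 0) (m : ZMod q) : (eChar q m) ^ q = 1 := by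
  rw [← eChar_pow hq, ZMod.natCast_self, zero_mul, eChar_zero]

lemma sum_eChar {q : ℕ} (hq : q ≠ 0) (m : ZMod q) :
    ∑ a ∈ Finset.range q, eChar q ((a : ZMod q) * m) = if m = 0 then (q : ℂ) else 0 := by
  have : ∑ a ∈ Finset.range q, eChar q ((a : ZMod q) * m)
      = ∑ a ∈ Finset.range q, (eChar q m) ^ a :=
    Finset.sum_congr rfl (fun a _ => eChar_pow hq m a)
  rw [this]
  split_ifs with h
  · subst h; simp [eChar_zero]
  · rw [geom_sum_eq (eChar_ne_one hq h), eChar_pow_card hq, sub_self, zero_div]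


lemma sum_pair {Q : ℕ} (hQ : Q ≠ 0) (x1 x2 : ZMod Q) :
    (Q : ℂ)⁻¹ * ∑ a ∈ Finset.range Q,
      eChar Q ((a : ZMod Q) * x1) * conj (eChar Q ((a : ZMod Q) * x2))
    = if x1 = x2 then 1 else 0 := by
  have hQC : (Q : ℂ) ≠ 0 := Nat.cast_ne_zero.mpr hQ
  have step : ∀ a : ℕ, eChar Q ((a : ZMod Q) * x1) * conj (eChar Q ((a : ZMod Q) * x2))
      = eChar Q ((a : ZMod Q) * (x1 - x2)) := by
    intro a
    rw [conj_eChar hQ, ← eChar_add hQ]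
    congr 1; ring
  rw [Finset.sum_congr rfl (fun a _ => step a), sum_eChar hQ]
  simp only [sub_eq_zero]
  split_ifs with h
  · exact inv_mul_cancel₀ hQC
  · exact mul_zero _

lemma unit_fact {d Q : ℕ} (hd : d ≠ 0) (hQ : Q ≠ 0) {v : ℤ}
    (h : Int.gcd v ((d : ℤ) * Q) = d) :
    (d : ℤ) ∣ v ∧ IsUnit (((v / (d : ℤ)) : ℤ) : ZMod Q) := by
  have hdvd : (d : ℤ) ∣ v := by rw [← h]; exact Int.gcd_dvd_left _ _
  have hdZ : (d : ℤ) ≠ 0 := Int.natCast_ne_zero.mpr hd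
  have hQd : ((d : ℤ) * Q) / d = Q := Int.mul_ediv_cancel_left _ hdZ
  have hco : Int.gcd (v / (d : ℤ)) (Q : ℤ) = 1 := by
    have h0 : 0 < Int.gcd v ((d : ℤ) * Q) := by rw [h]; exact Nat.pos_of_ne_zero hd
    have h1 := Int.gcd_div_gcd_div_gcd h0
    rw [h] at h1
    rwa [hQd] at h1
  obtain ⟨u, w, huw⟩ := Int.isCoprime_iff_gcd_eq_one.mpr hco
  refine ⟨hdvd, IsUnit.of_mul_eq_one ((u : ℤ) : ZMod Q) ?_⟩
  have hc := congrArg (fun t : ℤ => (t : ZMod Q)) huw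
  push_cast at hc
  rw [ZMod.natCast_self] at hc
  linear_combination hc

lemma key_iff {d Q : ℕ} (hd : d ≠ 0) (hQ : Q ≠ 0) (z1 z2 : GaussianInt)
    (h1 : Int.gcd z1.im ((d : ℤ) * Q) = d) (h2 : Int.gcd z2.im ((d : ℤ) * Q) = d) :
    ((z1.re : ZMod Q) * (((z1.im / (d : ℤ)) : ℤ) : ZMod Q)⁻¹
      = (z2.re : ZMod Q) * (((z2.im / (d : ℤ)) : ℤ) : ZMod Q)⁻¹)
    ↔ ((d : ℤ) * Q) ∣ (z1.re * z2.im - z2.re * z1.im) := by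
  obtain ⟨hdv1, hu1⟩ := unit_fact hd hQ h1
  obtain ⟨hdv2, hu2⟩ := unit_fact hd hQ h2
  have hdZ : (d : ℤ) ≠ 0 := Int.natCast_ne_zero.mpr hd
  set w1 : ℤ := z1.im / (d : ℤ) with hw1def
  set w2 : ℤ := z2.im / (d : ℤ) with hw2def
  have hw1 : z1.im = (d : ℤ) * w1 := (Int.mul_ediv_cancel' hdv1).symm
  have hw2 : z2.im = (d : ℤ) * w2 := (Int.mul_ediv_cancel' hdv2).symm
  set a1 : ZMod Q := ((w1 : ℤ) : ZMod Q) with ha1def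
  set a2 : ZMod Q := ((w2 : ℤ) : ZMod Q) with ha2def
  have i1 : a1⁻¹ * a1 = 1 := ZMod.inv_mul_of_unit a1 hu1
  have i2 : a2⁻¹ * a2 = 1 := ZMod.inv_mul_of_unit a2 hu2
  have stepA : ((z1.re : ZMod Q) * a1⁻¹ = (z2.re : ZMod Q) * a2⁻¹)
      ↔ ((z1.re : ZMod Q) * a2 = (z2.re : ZMod Q) * a1) := by
    constructor
    · intro h
      linear_combination (a1 * a2) * h - ((z1.re : ZMod Q) * a2) * i1
        + ((z2.re : ZMod Q) * a1) * i2
    · intro h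
      linear_combination (a1⁻¹ * a2⁻¹) * h + ((z2.re : ZMod Q) * a2⁻¹) * i1
        - ((z1.re : ZMod Q) * a1⁻¹) * i2
  have stepB : ((z1.re : ZMod Q) * a2 = (z2.re : ZMod Q) * a1)
      ↔ (Q : ℤ) ∣ (z1.re * w2 - z2.re * w1) := by
    rw [← sub_eq_zero (a := (z1.re : ZMod Q) * a2)]
    rw [← ZMod.intCast_zmod_eq_zero_iff_dvd]
    constructor
    · intro h; rw [← h]; push_cast [ha1def, ha2def]; ring
    · intro h; rw [← h]; push_cast [ha1def, ha2def]; ring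
  have stepC : (Q : ℤ) ∣ (z1.re * w2 - z2.re * w1)
      ↔ ((d : ℤ) * Q) ∣ (z1.re * z2.im - z2.re * z1.im) := by
    have hexp : z1.re * z2.im - z2.re * z1.im = (d : ℤ) * (z1.re * w2 - z2.re * w1) := by
      rw [hw1, hw2]; ring
    rw [hexp]
    exact (mul_dvd_mul_iff_left hdZ).symm
  exact stepA.trans (stepB.trans stepC)

lemma master (f : GaussianInt → ℂ) (s : Finset GaussianInt)
    (d Q : ℕ) (hd : d ≠ 0) (hQ : Q ≠ 0)
    (hsupp : ∀ z, f z ≠ 0 → Int.gcd z.im ((d : ℤ) * Q) = d) :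
    (∑ z1 ∈ s, ∑ z2 ∈ s,
      if ((d : ℤ) * Q) ∣ (z1.re * z2.im - z2.re * z1.im) then f z1 * conj (f z2) else 0)
    = (((Q : ℝ)⁻¹ * ∑ a ∈ Finset.range Q,
        ‖∑ z ∈ s, f z *
          eChar Q ((a : ZMod Q) * (z.re : ZMod Q) * (((z.im / (d : ℤ)) : ℤ) : ZMod Q)⁻¹)‖ ^ 2 : ℝ) : ℂ) := by
  have hQC : (Q : ℂ) ≠ 0 := Nat.cast_ne_zero.mpr hQ
  set x : GaussianInt → ZMod Q :=
    fun z => (z.re : ZMod Q) * (((z.im / (d : ℤ)) : ℤ) : ZMod Q)⁻¹ with hxdef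
  set T : ℕ → ℂ := fun a => ∑ z ∈ s, f z *
      eChar Q ((a : ZMod Q) * (z.re : ZMod Q) * (((z.im / (d : ℤ)) : ℤ) : ZMod Q)⁻¹) with hTdef
  have hT : ∀ a : ℕ, T a = ∑ z ∈ s, f z * eChar Q ((a : ZMod Q) * x z) := by
    intro a
    apply Finset.sum_congr rfl
    intro z _
    rw [hxdef, mul_assoc]
  set E : ℕ → GaussianInt → GaussianInt → ℂ := fun a z1 z2 =>
    eChar Q ((a : ZMod Q) * x z1) * conj (eChar Q ((a : ZMod Q) * x z2)) with hEdef
  -- RHS as complex sum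
  have rhs_eq : (((Q : ℝ)⁻¹ * ∑ a ∈ Finset.range Q, ‖T a‖ ^ 2 : ℝ) : ℂ)
      = (Q : ℂ)⁻¹ * ∑ a ∈ Finset.range Q, T a * conj (T a) := by
    push_cast
    congr 1
    apply Finset.sum_congr rfl
    intro a _
    rw [← Complex.ofReal_pow, Complex.sq_norm, Complex.mul_conj]
  rw [rhs_eq]
  have expand : ∀ a : ℕ, T a * conj (T a)
      = ∑ z1 ∈ s, ∑ z2 ∈ s, (f z1 * conj (f z2)) * E a z1 z2 := by
    intro a
    rw [hT a, map_sum, Finset.sum_mul_sum]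
    apply Finset.sum_congr rfl; intro z1 _
    apply Finset.sum_congr rfl; intro z2 _
    rw [map_mul, hEdef]; ring
  have swap : (Q : ℂ)⁻¹ * ∑ a ∈ Finset.range Q, T a * conj (T a)
      = ∑ z1 ∈ s, ∑ z2 ∈ s, (f z1 * conj (f z2)) *
          ((Q : ℂ)⁻¹ * ∑ a ∈ Finset.range Q, E a z1 z2) := by
    calc (Q : ℂ)⁻¹ * ∑ a ∈ Finset.range Q, T a * conj (T a)
        = ∑ a ∈ Finset.range Q, ∑ z1 ∈ s, ∑ z2 ∈ s,
            (Q : ℂ)⁻¹ * ((f z1 * conj (f z2)) * E a z1 z2) := by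
          rw [Finset.mul_sum]
          apply Finset.sum_congr rfl; intro a _
          rw [expand a, Finset.mul_sum]
          apply Finset.sum_congr rfl; intro z1 _
          rw [Finset.mul_sum]
      _ = ∑ z1 ∈ s, ∑ a ∈ Finset.range Q, ∑ z2 ∈ s,
            (Q : ℂ)⁻¹ * ((f z1 * conj (f z2)) * E a z1 z2) := Finset.sum_comm
      _ = ∑ z1 ∈ s, ∑ z2 ∈ s, ∑ a ∈ Finset.range Q,
            (Q : ℂ)⁻¹ * ((f z1 * conj (f z2)) * E a z1 z2) :=
          Finset.sum_congr rfl (fun z1 _ => Finset.sum_comm)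
      _ = ∑ z1 ∈ s, ∑ z2 ∈ s, (f z1 * conj (f z2)) *
            ((Q : ℂ)⁻¹ * ∑ a ∈ Finset.range Q, E a z1 z2) := by
          apply Finset.sum_congr rfl; intro z1 _
          apply Finset.sum_congr rfl; intro z2 _
          rw [Finset.mul_sum, Finset.mul_sum]
          apply Finset.sum_congr rfl; intro a _; ring
  rw [swap]
  apply Finset.sum_congr rfl; intro z1 _
  apply Finset.sum_congr rfl; intro z2 _
  rw [hEdef]
  rw [sum_pair hQ (x z1) (x z2)]
  by_cases hf1 : f z1 = 0
  · simp [hf1]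
  by_cases hf2 : f z2 = 0
  · simp [hf2]
  have hiff := key_iff hd hQ z1 z2 (hsupp _ hf1) (hsupp _ hf2)
  rw [hxdef]
  simp only []
  rw [if_congr hiff rfl rfl]
  rw [mul_ite, mul_one, mul_zero]

lemma gcd_im_dvd {q : ℕ} {z1 z2 : GaussianInt} (h1 : Int.gcd z1.re z1.im = 1)
    (hdvd : (q : ℤ) ∣ (z1.re * z2.im - z2.re * z1.im)) :
    Int.gcd z1.im (q : ℤ) ∣ Int.gcd z2.im (q : ℤ) := by
  set D : ℤ := (Int.gcd z1.im (q : ℤ) : ℤ) with hD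
  have hD1 : D ∣ z1.im := Int.gcd_dvd_left _ _
  have hDq : D ∣ (q : ℤ) := Int.gcd_dvd_right _ _
  have hDu : D ∣ z1.re * z2.im := by
    have hexp : z1.re * z2.im = (z1.re * z2.im - z2.re * z1.im) + z2.re * z1.im := by ring
    rw [hexp]
    exact dvd_add (hDq.trans hdvd) (Dvd.dvd.mul_left hD1 z2.re)
  have hco : IsCoprime D z1.re :=
    ((Int.isCoprime_iff_gcd_eq_one.mpr h1).of_isCoprime_of_dvd_right hD1).symm
  have hv2 : D ∣ z2.im := hco.dvd_of_dvd_mul_left hDu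
  have hfin : D ∣ (Int.gcd z2.im (q : ℤ) : ℤ) := Int.dvd_coe_gcd hv2 hDq
  rw [hD] at hfin
  exact_mod_cast hfin

lemma gcd_im_eq {q : ℕ} {z1 z2 : GaussianInt}
    (h1 : Int.gcd z1.re z1.im = 1) (h2 : Int.gcd z2.re z2.im = 1)
    (hdvd : (q : ℤ) ∣ (z1.re * z2.im - z2.re * z1.im)) :
    Int.gcd z1.im (q : ℤ) = Int.gcd z2.im (q : ℤ) := by
  have hdvd' : (q : ℤ) ∣ (z2.re * z1.im - z1.re * z2.im) := by
    have : z2.re * z1.im - z1.re * z2.im = -(z1.re * z2.im - z2.re * z1.im) := by ring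
    rw [this]; exact hdvd.neg_right
  exact Nat.dvd_antisymm (gcd_im_dvd h1 hdvd) (gcd_im_dvd h2 hdvd')

lemma gcd_mul_eq_one_iff {a b : ℤ} {n : ℤ} :
    Int.gcd (a * b) n = 1 ↔ Int.gcd a n = 1 ∧ Int.gcd b n = 1 := by
  simp only [← Int.isCoprime_iff_gcd_eq_one]
  exact IsCoprime.mul_left_iff

lemma double_finsum_eq {c : GaussianInt → ℂ} (hfin : (Function.support c).Finite)
    (g : GaussianInt → GaussianInt → ℂ)
    (h1 : ∀ z1 z2, c z1 = 0 → g z1 z2 = 0) (h2 : ∀ z1 z2, c z2 = 0 → g z1 z2 = 0) :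
    (∑ᶠ z1 : GaussianInt, ∑ᶠ z2 : GaussianInt, g z1 z2)
    = ∑ z1 ∈ hfin.toFinset, ∑ z2 ∈ hfin.toFinset, g z1 z2 := by
  have inner : ∀ z1, (∑ᶠ z2, g z1 z2) = ∑ z2 ∈ hfin.toFinset, g z1 z2 := by
    intro z1
    apply finsum_eq_sum_of_support_subset
    intro z2 hz2
    rw [Set.Finite.coe_toFinset]
    simp only [Function.mem_support] at hz2 ⊢
    intro hc
    exact hz2 (h2 z1 z2 hc)
  rw [finsum_congr inner]
  apply finsum_eq_sum_of_support_subset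
  intro z1 hz1
  rw [Set.Finite.coe_toFinset]
  simp only [Function.mem_support] at hz1 ⊢
  intro hc
  exact hz1 (Finset.sum_eq_zero (fun z2 _ => h1 z1 z2 hc))

lemma single_finsum_eq {c : GaussianInt → ℂ} (hfin : (Function.support c).Finite)
    (g : GaussianInt → ℂ) (h1 : ∀ z, c z = 0 → g z = 0) :
    (∑ᶠ z : GaussianInt, g z) = ∑ z ∈ hfin.toFinset, g z := by
  apply finsum_eq_sum_of_support_subset
  intro z hz
  rw [Set.Finite.coe_toFinset]
  simp only [Function.mem_support] at hz ⊢
  intro hc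
  exact hz (h1 z hc)

/-- **Identity (1.12).** `S'_q = q⁻¹ ∑_{a mod q} |∑_{(v,q)=1} c(z) e(a u v̄ / q)|²`; in particular
`S'_q` is real and nonnegative.  Moreover if `c` is supported on primitive Gaussian integers
then `S'_q ≤ S_q` (the latter being real as well). -/
theorem detSum'_eq_square_mean (c : GaussianInt → ℂ) (hfin : (Function.support c).Finite)
    (q : ℕ) (hq : 1 ≤ q) :
    detSum' c q = (((q : ℝ)⁻¹ * ∑ a ∈ Finset.range q,
        ‖∑ᶠ z : GaussianInt,
          if Int.gcd z.im q = 1 then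
            c z * eChar q ((a : ZMod q) * (z.re : ZMod q) * ((z.im : ZMod q))⁻¹)
          else 0‖ ^ 2 : ℝ) : ℂ) ∧
    ((∀ z : GaussianInt, c z ≠ 0 → Int.gcd z.re z.im = 1 ∧ z.im ≠ 0) →
      (detSum c q).im = 0 ∧ (detSum' c q).re ≤ (detSum c q).re) := by
  have hq0 : q ≠ 0 := Nat.one_le_iff_ne_zero.mp hq
  set s : Finset GaussianInt := hfin.toFinset with hs
  set F : ℕ → GaussianInt → ℂ := fun d z => if Int.gcd z.im (q : ℤ) = d then c z else 0 with hF
  have hpoint : ∀ z1 z2 : GaussianInt,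
      (if (q : ℤ) ∣ (z1.re * z2.im - z2.re * z1.im) ∧ Int.gcd (z1.im * z2.im) q = 1
        then c z1 * conj (c z2) else 0)
      = (if (q : ℤ) ∣ (z1.re * z2.im - z2.re * z1.im)
        then F 1 z1 * conj (F 1 z2) else 0) := by
    intro z1 z2
    have hand : Int.gcd (z1.im * z2.im) (q : ℤ) = 1
        ↔ Int.gcd z1.im (q : ℤ) = 1 ∧ Int.gcd z2.im (q : ℤ) = 1 := gcd_mul_eq_one_iff
    by_cases hdvd : (q : ℤ) ∣ (z1.re * z2.im - z2.re * z1.im)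
    · simp only [hdvd, true_and, if_pos]
      by_cases h1 : Int.gcd z1.im (q : ℤ) = 1 <;> by_cases h2 : Int.gcd z2.im (q : ℤ) = 1 <;>
        simp [hF, h1, h2, hand]
    · simp [hdvd]
  have hSd' : detSum' c q = ∑ z1 ∈ s, ∑ z2 ∈ s,
      (if (q : ℤ) ∣ (z1.re * z2.im - z2.re * z1.im) then F 1 z1 * conj (F 1 z2) else 0) := by
    rw [show detSum' c q = ∑ z1 ∈ s, ∑ z2 ∈ s,
      (if (q : ℤ) ∣ (z1.re * z2.im - z2.re * z1.im) ∧ Int.gcd (z1.im * z2.im) q = 1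
        then c z1 * conj (c z2) else 0) from double_finsum_eq hfin
          (fun z1 z2 => if (q : ℤ) ∣ (z1.re * z2.im - z2.re * z1.im)
              ∧ Int.gcd (z1.im * z2.im) q = 1 then c z1 * conj (c z2) else 0)
          (fun z1 z2 hc => by rw [hc]; simp) (fun z1 z2 hc => by rw [hc]; simp)]
    exact Finset.sum_congr rfl (fun z1 _ => Finset.sum_congr rfl (fun z2 _ => hpoint z1 z2))
  have hsupp1 : ∀ z, F 1 z ≠ 0 → Int.gcd z.im (((1 : ℕ) : ℤ) * (q : ℕ)) = 1 := by
    intro z hz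
    rw [Nat.cast_one, one_mul]
    by_contra h
    exact hz (if_neg h)
  have hm1 := master (F 1) s 1 q one_ne_zero hq0 hsupp1
  simp only [Nat.cast_one, one_mul, Int.ediv_one] at hm1
  constructor
  · rw [hSd', hm1]
    congr 1
    congr 1
    apply Finset.sum_congr rfl; intro a _
    congr 2
    rw [single_finsum_eq hfin
      (fun z => if Int.gcd z.im (q : ℤ) = 1 then
          c z * eChar q ((a : ZMod q) * (z.re : ZMod q) * ((z.im : ZMod q))⁻¹) else 0)
      (fun z hc => by rw [hc]; simp)]
    apply Finset.sum_congr rfl; intro z _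
    simp [hF, ite_mul]
  · intro hprim
    set M : ℕ → ℂ := fun d => ∑ z1 ∈ s, ∑ z2 ∈ s,
        (if (q : ℤ) ∣ (z1.re * z2.im - z2.re * z1.im) then F d z1 * conj (F d z2) else 0)
      with hM
    have hSd : detSum c q = ∑ d ∈ q.divisors, M d := by
      rw [show detSum c q = ∑ z1 ∈ s, ∑ z2 ∈ s,
        (if (q : ℤ) ∣ (z1.re * z2.im - z2.re * z1.im) then c z1 * conj (c z2) else 0)
        from double_finsum_eq hfin
          (fun z1 z2 => if (q : ℤ) ∣ (z1.re * z2.im - z2.re * z1.im)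
            then c z1 * conj (c z2) else 0)
          (fun z1 z2 hc => by rw [hc]; simp) (fun z1 z2 hc => by rw [hc]; simp)]
      simp only [hM]
      rw [show (∑ d ∈ q.divisors, ∑ z1 ∈ s, ∑ z2 ∈ s,
          (if (q : ℤ) ∣ (z1.re * z2.im - z2.re * z1.im) then F d z1 * conj (F d z2) else 0))
          = ∑ z1 ∈ s, ∑ z2 ∈ s, ∑ d ∈ q.divisors,
          (if (q : ℤ) ∣ (z1.re * z2.im - z2.re * z1.im) then F d z1 * conj (F d z2) else 0)
        from by
          rw [Finset.sum_comm]
          exact Finset.sum_congr rfl (fun z1 _ => Finset.sum_comm)]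
      apply Finset.sum_congr rfl; intro z1 _
      apply Finset.sum_congr rfl; intro z2 _
      by_cases hdvd : (q : ℤ) ∣ (z1.re * z2.im - z2.re * z1.im)
      · simp only [if_pos hdvd]
        by_cases h1 : c z1 = 0
        · simp [hF, h1]
        by_cases h2 : c z2 = 0
        · simp [hF, h2]
        have hg := gcd_im_eq (hprim z1 h1).1 (hprim z2 h2).1 hdvd
        have hmem : Int.gcd z1.im (q : ℤ) ∈ q.divisors := by
          rw [Nat.mem_divisors]
          refine ⟨?_, hq0⟩
          have hdq : (↑(Int.gcd z1.im (q : ℤ)) : ℤ) ∣ (q : ℤ) := Int.gcd_dvd_right _ _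
          exact_mod_cast hdq
        have hterm : ∀ d : ℕ, F d z1 * conj (F d z2)
            = if Int.gcd z1.im (q : ℤ) = d ∧ Int.gcd z2.im (q : ℤ) = d
              then c z1 * conj (c z2) else 0 := by
          intro d
          by_cases hA : Int.gcd z1.im (q : ℤ) = d <;> by_cases hB : Int.gcd z2.im (q : ℤ) = d <;>
            simp [hF, hA, hB]
        rw [Finset.sum_congr rfl (fun d _ => hterm d)]
        have hcond : ∀ d : ℕ, (Int.gcd z1.im (q : ℤ) = d ∧ Int.gcd z2.im (q : ℤ) = d)
            ↔ d = Int.gcd z1.im (q : ℤ) := by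
          intro d
          constructor
          · rintro ⟨h, -⟩; exact h.symm
          · intro h
            refine ⟨h.symm, ?_⟩
            rw [← hg]; exact h.symm
        rw [Finset.sum_congr rfl (fun d _ => if_congr (hcond d) rfl rfl)]
        rw [Finset.sum_ite_eq' q.divisors (Int.gcd z1.im (q : ℤ))
          (fun _ => c z1 * conj (c z2))]
        rw [if_pos hmem]
      · simp [hdvd]
    have hMcast : ∀ d ∈ q.divisors, ∃ rd : ℝ, 0 ≤ rd ∧ M d = (rd : ℂ) := by
      intro d hdmem
      obtain ⟨hdq, -⟩ := Nat.mem_divisors.mp hdmem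
      have hd0 : d ≠ 0 := by rintro rfl; exact hq0 (Nat.eq_zero_of_zero_dvd hdq)
      have hQ0 : q / d ≠ 0 :=
        (Nat.div_pos (Nat.le_of_dvd (Nat.pos_of_ne_zero hq0) hdq) (Nat.pos_of_ne_zero hd0)).ne'
      have hqeq : ((d : ℤ) * ((q / d : ℕ) : ℤ)) = (q : ℤ) := by
        exact_mod_cast congrArg (Nat.cast : ℕ → ℤ) (Nat.mul_div_cancel' hdq)
      have hsupp : ∀ z, F d z ≠ 0 → Int.gcd z.im ((d : ℤ) * ((q / d : ℕ) : ℤ)) = d := by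
        intro z hz
        rw [hqeq]
        by_contra h
        exact hz (if_neg h)
      have hm := master (F d) s d (q / d) hd0 hQ0 hsupp
      rw [hqeq] at hm
      exact ⟨_, by positivity, hm⟩
    constructor
    · rw [hSd, Complex.im_sum]
      apply Finset.sum_eq_zero
      intro d hd
      obtain ⟨rd, -, hrd⟩ := hMcast d hd
      rw [hrd]; exact Complex.ofReal_im rd
    · have hS'M : detSum' c q = M 1 := hSd'
      rw [hS'M, hSd]
      conv_rhs => rw [Complex.re_sum]
      apply Finset.single_le_sum (f := fun d => (M d).re) ?_ (Nat.one_mem_divisors.mpr hq0)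
      intro d hd
      obtain ⟨rd, hrd0, hrd⟩ := hMcast d hd
      show 0 ≤ (M d).re
      rw [hrd, Complex.ofReal_re]
      exact hrd0
end
end

section
/- For every real B > 0 there exists B' > 0 such that for every K ≥ 1 there is a constant C = C(B,K) with the following property. Let X ≥ 2 and let c : ℤ[i] → ℂ be supported on Gaussian integers z with 1 < |z|² ≤ X, satisfy |c(z)| ≤ 1, and satisfy the Siegel–Walfisz condition with exponent B' and constant K. Then for all integers e ≥ 1, k ≥ 0, ℓ ≥ 1, all α ∈ ℤ[i] and all real t, |Σ_{z = u+iv ∈ ℤ[i], z ≡ α (mod ℓ), gcd(v, e) = 1} c(z)·(conj(z)/z)^k·|z|^{it}| ≤ C·τ(e)·ℓ²·(k²+1)·(t²+1)·X·(log X)^{−B}, where τ(e) is the number of positive divisors of e. -/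
open scoped ComplexConjugate
open scoped Classical

noncomputable section

open scoped ArithmeticFunction
open scoped ArithmeticFunction.Moebius

private def fAux (c : GaussianInt → ℂ) (k : ℕ) (t : ℝ) (z : GaussianInt) : ℂ :=
  c z * (conj (GaussianInt.toComplex z) / GaussianInt.toComplex z) ^ k *
    (‖GaussianInt.toComplex z‖ : ℂ) ^ ((t : ℂ) * Complex.I)

private lemma int_resid {d : ℕ} (hd : 0 < d) (a : ℤ) (n : ℕ) (hn : n < d) :
    ((d:ℤ) ∣ a - n) ↔ (n : ℤ) = a % d := by
  clear hd
  constructor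
  · rintro ⟨q, hq⟩
    have h1 : a = (n:ℤ) + d * q := by linarith
    rw [h1, Int.add_mul_emod_self_left, Int.emod_eq_of_lt (by positivity)
      (by exact_mod_cast hn)]
  · rintro h
    refine ⟨a / d, ?_⟩
    rw [h, Int.emod_def]; ring

private lemma moebius_sum (n : ℕ) :
    (∑ d ∈ n.divisors, ((μ d : ℤ):ℂ)) = if n = 1 then 1 else 0 := by
  simp_rw [← ArithmeticFunction.intCoe_apply]
  rw [← ArithmeticFunction.coe_mul_zeta_apply, ArithmeticFunction.coe_moebius_mul_coe_zeta,
    ArithmeticFunction.one_apply]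

set_option maxHeartbeats 2000000 in
/-- **Generalized Siegel–Walfisz condition (4.2).** For every `B > 0` there is `B' > 0` such
that for every `K ≥ 1` there is `C = C(B,K)` with:  if `c` is supported on Gaussian integers
with `1 < |z|² ≤ X`, `|c(z)| ≤ 1`, and `c` satisfies the Siegel–Walfisz condition with exponent
`B'` and constant `K`, then for all `e ≥ 1`, `k ≥ 0`, `ℓ ≥ 1`, `α ∈ ℤ[i]`, `t ∈ ℝ`,
`|∑_{z ≡ α (ℓ), (v,e)=1} c(z)(conj z/z)^k |z|^{it}| ≤ C τ(e) ℓ² (k²+1)(t²+1) X (log X)^{-B}`. -/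
theorem generalized_siegel_walfisz :
    ∀ B : ℝ, 0 < B → ∃ B' : ℝ, 0 < B' ∧ ∀ K : ℝ, 1 ≤ K → ∃ C : ℝ,
      ∀ (X : ℝ) (c : GaussianInt → ℂ), 2 ≤ X →
        (∀ z : GaussianInt, c z ≠ 0 → 1 < (Zsqrtd.norm z : ℝ) ∧ (Zsqrtd.norm z : ℝ) ≤ X) →
        (∀ z, ‖c z‖ ≤ 1) → SWCond c X B' K →
        ∀ (e k ℓ : ℕ), 1 ≤ e → 1 ≤ ℓ → ∀ (α : GaussianInt) (t : ℝ),
          ‖∑ᶠ z : GaussianInt,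
              if (ℓ : GaussianInt) ∣ (z - α) ∧ Int.gcd z.im e = 1 then
                c z * (conj (GaussianInt.toComplex z) / GaussianInt.toComplex z) ^ k *
                  (‖GaussianInt.toComplex z‖ : ℂ) ^ ((t : ℂ) * Complex.I)
              else 0‖
            ≤ C * (e.divisors.card : ℝ) * (ℓ : ℝ) ^ 2 * ((k : ℝ) ^ 2 + 1) * (t ^ 2 + 1) * X *
                Real.log X ^ (-B) := by
  intro B hB
  refine ⟨5 * B, by linarith, fun K hK => ⟨K * (5 + 5 * (2*B)^B), ?_⟩⟩
  intro X c hX hsupp hbd hSW e k ℓ he hℓ α t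
  have hX0 : (0:ℝ) < X := by linarith
  have hY : 0 < Real.log X := Real.log_pos (by linarith)
  have hYnB : 0 < Real.log X ^ (-B) := Real.rpow_pos_of_pos hY _
  have hsX0 : (0:ℝ) ≤ Real.sqrt X := Real.sqrt_nonneg X
  have hsX1 : (1:ℝ) ≤ Real.sqrt X := by
    rw [show (1:ℝ) = Real.sqrt 1 by simp]; exact Real.sqrt_le_sqrt (by linarith)
  have hE1 : (1:ℝ) ≤ ((k:ℝ)^2+1) * (t^2+1) := by nlinarith [sq_nonneg (k:ℝ), sq_nonneg t]
  have hl2 : (1:ℝ) ≤ (ℓ:ℝ)^2 := by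
    have : (1:ℝ) ≤ (ℓ:ℝ) := by exact_mod_cast hℓ
    nlinarith
  have hc0 : c 0 = 0 := by
    by_contra h
    have h1 := (hsupp 0 h).1
    rw [show (Zsqrtd.norm (0 : GaussianInt)) = 0 from by simp [Zsqrtd.norm]] at h1
    norm_num at h1
  have hfzero : ∀ z, c z = 0 → fAux c k t z = 0 := by intro z h; simp [fAux, h]
  have hf0 : fAux c k t 0 = 0 := hfzero 0 hc0
  have hfbound : ∀ z, ‖fAux c k t z‖ ≤ 1 := by
    intro z
    by_cases h : c z = 0
    · simp [hfzero z h]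
    · have hz0 : z ≠ 0 := fun hz => h (hz ▸ hc0)
      have hzc : GaussianInt.toComplex z ≠ 0 := by
        rw [Ne, GaussianInt.toComplex_eq_zero]; exact hz0
      have habs : 0 < ‖GaussianInt.toComplex z‖ := by
        simpa using norm_pos_iff.mpr hzc
      have h1 : ‖(‖GaussianInt.toComplex z‖ : ℂ)
          ^ ((t:ℂ) * Complex.I)‖ = 1 := by
        rw [Complex.norm_cpow_eq_rpow_re_of_pos habs]
        simp
      show ‖c z * (conj (GaussianInt.toComplex z) / GaussianInt.toComplex z) ^ k *
          (‖GaussianInt.toComplex z‖ : ℂ) ^ ((t : ℂ) * Complex.I)‖ ≤ 1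
      rw [norm_mul, norm_mul, norm_pow, norm_div, RCLike.norm_conj,
        div_self (ne_of_gt habs), one_pow, mul_one, h1, mul_one]
      exact hbd z
  have habs_le : ∀ z : GaussianInt, c z ≠ 0 →
      (|(z.re:ℝ)| ≤ Real.sqrt X ∧ |(z.im:ℝ)| ≤ Real.sqrt X) := by
    intro z h
    have h2 := (hsupp z h).2
    have hnorm : ((z.re:ℝ))^2 + (z.im:ℝ)^2 ≤ X := by
      have h3 : (Zsqrtd.norm z : ℝ) = (z.re:ℝ)^2 + (z.im:ℝ)^2 := by
        rw [Zsqrtd.norm_def]; push_cast; ring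
      rw [h3] at h2; exact h2
    exact ⟨Real.abs_le_sqrt (by nlinarith [sq_nonneg (z.im:ℝ)]),
      Real.abs_le_sqrt (by nlinarith [sq_nonneg (z.re:ℝ)])⟩
  set N : ℕ := ⌊Real.sqrt X⌋₊ with hN
  set S : Finset GaussianInt :=
    (Finset.Icc (-(N:ℤ)) (N:ℤ) ×ˢ Finset.Icc (-(N:ℤ)) (N:ℤ)).image
      (fun p : ℤ × ℤ => (⟨p.1, p.2⟩ : GaussianInt)) with hSdef
  have hmemS : ∀ z : GaussianInt, c z ≠ 0 → z ∈ S := by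
    intro z h
    obtain ⟨h1, h2⟩ := habs_le z h
    have hr : z.re.natAbs ≤ N := by
      apply Nat.le_floor
      calc ((z.re.natAbs : ℕ) : ℝ) = |(z.re:ℝ)| := by simp [Nat.cast_natAbs]
        _ ≤ Real.sqrt X := h1
    have hi : z.im.natAbs ≤ N := by
      apply Nat.le_floor
      calc ((z.im.natAbs : ℕ) : ℝ) = |(z.im:ℝ)| := by simp [Nat.cast_natAbs]
        _ ≤ Real.sqrt X := h2
    refine Finset.mem_image.2 ⟨(z.re, z.im), Finset.mem_product.2 ⟨?_, ?_⟩, rfl⟩ <;>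
      · rw [Finset.mem_Icc]; omega
  have hconv : ∀ (P : GaussianInt → Prop) (_ : DecidablePred P),
      (∑ᶠ z, if P z then fAux c k t z else 0) = ∑ z ∈ S, if P z then fAux c k t z else 0 := by
    intro P _
    apply finsum_eq_sum_of_support_subset
    intro z hz
    simp only [Function.mem_support] at hz
    by_cases h : P z
    · exact hmemS z fun h0 => hz (by simp [h, hfzero z h0])
    · simp [h] at hz
  have hsplit : (∑ z ∈ S, if (↑ℓ:GaussianInt) ∣ z - α ∧ Int.gcd z.im e = 1
        then fAux c k t z else 0)
      = ∑ d ∈ e.divisors, ((μ d : ℤ):ℂ) *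
          ∑ z ∈ S, (if (↑ℓ:GaussianInt) ∣ z - α ∧ (d:ℤ) ∣ z.im then fAux c k t z else 0) := by
    have hz : ∀ z : GaussianInt,
        (if (↑ℓ:GaussianInt) ∣ z - α ∧ Int.gcd z.im e = 1 then fAux c k t z else 0)
          = ∑ d ∈ e.divisors, ((μ d:ℤ):ℂ) *
              (if (↑ℓ:GaussianInt) ∣ z - α ∧ (d:ℤ) ∣ z.im then fAux c k t z else 0) := by
      intro z
      by_cases hdv : (↑ℓ:GaussianInt) ∣ z - α
      · simp only [hdv, true_and]
        have h1 : ∀ d:ℕ, ((μ d:ℤ):ℂ) * (if (d:ℤ) ∣ z.im then fAux c k t z else 0)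
            = (if (d:ℤ) ∣ z.im then ((μ d:ℤ):ℂ) else 0) * fAux c k t z := by
          intro d; split_ifs <;> ring
        rw [Finset.sum_congr rfl (fun d _ => h1 d), ← Finset.sum_mul, ← Finset.sum_filter]
        have h2 : e.divisors.filter (fun d : ℕ => (d:ℤ) ∣ z.im) = (Int.gcd z.im e).divisors := by
          ext d
          simp only [Finset.mem_filter, Nat.mem_divisors]
          constructor
          · rintro ⟨⟨hde, he0⟩, hdz⟩
            refine ⟨Nat.dvd_gcd (Int.natCast_dvd.mp hdz) ?_, ?_⟩
            · simpa using hde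
            · intro hg
              rw [Int.gcd_eq_zero_iff] at hg
              exact he0 (by exact_mod_cast hg.2)
          · rintro ⟨hdg, hg0⟩
            refine ⟨⟨?_, by omega⟩, ?_⟩
            · have h3 := hdg.trans (Nat.gcd_dvd_right z.im.natAbs (e:ℤ).natAbs)
              simpa using h3
            · exact Int.natCast_dvd.mpr (hdg.trans (Nat.gcd_dvd_left _ _))
        rw [h2, moebius_sum]
        split_ifs <;> simp
      · simp only [hdv, false_and, if_false, mul_zero, Finset.sum_const_zero]
    rw [Finset.sum_congr rfl (fun z _ => hz z), Finset.sum_comm]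
    exact Finset.sum_congr rfl (fun d _ => by rw [Finset.mul_sum])
  have key : ∀ d ∈ e.divisors,
      ‖∑ z ∈ S, if (↑ℓ:GaussianInt) ∣ z - α ∧ (d:ℤ) ∣ z.im
          then fAux c k t z else 0‖
        ≤ (K * (5 + 5*(2*B)^B)) * (ℓ:ℝ)^2 * (((k:ℝ)^2+1) * (t^2+1)) * X
            * Real.log X ^ (-B) := by
    intro d hd
    have hd1 : 0 < d := Nat.pos_of_mem_divisors hd
    have hd0 : (0:ℝ) < d := by exact_mod_cast hd1
    have h2B : (0:ℝ) ≤ (2*B)^B := Real.rpow_nonneg (by linarith) B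
    by_cases hcase : (d:ℝ) ≤ Real.log X ^ B
    · -- small divisors: use the Siegel–Walfisz hypothesis on residue classes mod ℓ*d
      have hl0 : (ℓ : GaussianInt) ≠ 0 := by
        intro h
        have h1 := congrArg Zsqrtd.re h
        rw [Zsqrtd.re_natCast, Zsqrtd.re_zero] at h1
        omega
      have hL1 : ∀ z : GaussianInt,
          (if (↑ℓ:GaussianInt) ∣ z - α ∧ (d:ℤ) ∣ z.im then fAux c k t z else 0)
            = ∑ p ∈ Finset.range d ×ˢ Finset.range d,
                (if ((ℓ*d : ℕ) : GaussianInt) ∣ z - (α + (ℓ:GaussianInt) * ⟨(p.1:ℤ), (p.2:ℤ)⟩)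
                    ∧ (d:ℤ) ∣ (α + (ℓ:GaussianInt) * (⟨(p.1:ℤ), (p.2:ℤ)⟩:GaussianInt)).im
                  then fAux c k t z else 0) := by
        intro z
        by_cases hz : (↑ℓ:GaussianInt) ∣ z - α
        · obtain ⟨w, hw⟩ := hz
          have hzdvd : (↑ℓ:GaussianInt) ∣ z - α := ⟨w, hw⟩
          have hdz0 : (d:ℤ) ≠ 0 := by exact_mod_cast hd1.ne'
          have hdZ : (0:ℤ) < (d:ℤ) := by exact_mod_cast hd1
          have hjval : (((w.re % (d:ℤ)).toNat : ℕ) : ℤ) = w.re % d :=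
            Int.toNat_of_nonneg (Int.emod_nonneg _ hdz0)
          have hmval : (((w.im % (d:ℤ)).toNat : ℕ) : ℤ) = w.im % d :=
            Int.toNat_of_nonneg (Int.emod_nonneg _ hdz0)
          set j : ℕ := (w.re % (d:ℤ)).toNat with hjdef
          set m : ℕ := (w.im % (d:ℤ)).toNat with hmdef
          have hjlt : j < d := by
            have h1 := Int.emod_lt_of_pos w.re hdZ; omega
          have hmlt : m < d := by
            have h1 := Int.emod_lt_of_pos w.im hdZ; omega
          have hchar : ∀ p : ℕ × ℕ, p ∈ Finset.range d ×ˢ Finset.range d →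
              (((ℓ*d : ℕ):GaussianInt) ∣ z - (α + (ℓ:GaussianInt) * ⟨(p.1:ℤ), (p.2:ℤ)⟩)
                ↔ p = (j, m)) := by
            rintro ⟨p1, p2⟩ hp
            simp only [Finset.mem_product, Finset.mem_range] at hp
            have hzβ : z - (α + (ℓ:GaussianInt) * ⟨(p1:ℤ), (p2:ℤ)⟩)
                = (↑ℓ:GaussianInt) * (w - ⟨(p1:ℤ), (p2:ℤ)⟩) := by
              have h4 : z - (α + (ℓ:GaussianInt) * ⟨(p1:ℤ), (p2:ℤ)⟩)
                  = (z - α) - (↑ℓ:GaussianInt) * ⟨(p1:ℤ), (p2:ℤ)⟩ := by ring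
              rw [h4, hw, ← mul_sub]
            have hcast : ((ℓ*d : ℕ):GaussianInt)
                = (↑ℓ:GaussianInt) * ((d:ℤ) : GaussianInt) := by
              push_cast
              ring
            constructor
            · intro h1
              rw [hzβ, hcast] at h1
              have h5 : ((d:ℤ):GaussianInt) ∣ (w - ⟨(p1:ℤ),(p2:ℤ)⟩) :=
                (mul_dvd_mul_iff_left hl0).mp h1
              rw [Zsqrtd.intCast_dvd] at h5
              obtain ⟨h7, h8⟩ := h5
              have h7' : (d:ℤ) ∣ w.re - p1 := by simpa using h7
              have h8' : (d:ℤ) ∣ w.im - p2 := by simpa using h8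
              have e1 := (int_resid hd1 w.re p1 hp.1).mp h7'
              have e2 := (int_resid hd1 w.im p2 hp.2).mp h8'
              simp only [Prod.mk.injEq]
              omega
            · intro h1
              injection h1 with h1a h1b
              subst h1a; subst h1b
              rw [hzβ, hcast]
              apply mul_dvd_mul_left
              rw [Zsqrtd.intCast_dvd]
              constructor
              · have h9 : (w - (⟨(j:ℤ), (m:ℤ)⟩ : GaussianInt)).re = w.re - j := rfl
                rw [h9]
                exact ⟨w.re / d, by rw [hjval, Int.emod_def]; ring⟩
              · have h9 : (w - (⟨(j:ℤ), (m:ℤ)⟩ : GaussianInt)).im = w.im - m := rfl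
                rw [h9]
                exact ⟨w.im / d, by rw [hmval, Int.emod_def]; ring⟩
          have hzim : z.im = α.im + (ℓ:ℤ) * w.im := by
            have h1 := congrArg Zsqrtd.im hw
            simp only [Zsqrtd.im_sub, Zsqrtd.im_mul, Zsqrtd.re_natCast, Zsqrtd.im_natCast,
              zero_mul, add_zero] at h1
            omega
          have hβim : (α + (ℓ:GaussianInt) * (⟨(j:ℤ), (m:ℤ)⟩ : GaussianInt)).im
              = α.im + (ℓ:ℤ) * m := by
            simp [Zsqrtd.im_add, Zsqrtd.im_mul]
          have hdm : (d:ℤ) ∣ w.im - m :=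
            ⟨w.im / d, by rw [hmval, Int.emod_def]; ring⟩
          have h3 : (d:ℤ) ∣ z.im - (α + (ℓ:GaussianInt) * (⟨(j:ℤ), (m:ℤ)⟩:GaussianInt)).im := by
            rw [hzim, hβim,
              show α.im + (ℓ:ℤ)*w.im - (α.im + (ℓ:ℤ)*m) = (ℓ:ℤ) * (w.im - m) by ring]
            exact hdm.mul_left _
          have him : ((d:ℤ) ∣ (α + (ℓ:GaussianInt) * (⟨(j:ℤ), (m:ℤ)⟩:GaussianInt)).im)
              ↔ ((d:ℤ) ∣ z.im) := by
            constructor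
            · intro h; have h4 := dvd_add h3 h; simpa using h4
            · intro h; have h4 := dvd_sub h h3; simpa using h4
          rw [Finset.sum_eq_single_of_mem (j, m)
            (Finset.mem_product.mpr ⟨Finset.mem_range.mpr hjlt, Finset.mem_range.mpr hmlt⟩)
            (fun p hp hne => by
              rw [if_neg]; rintro ⟨h1, -⟩; exact hne ((hchar p hp).mp h1))]
          have hc1 : ((ℓ*d : ℕ):GaussianInt)
              ∣ z - (α + (ℓ:GaussianInt) * ⟨(((j,m).1 : ℕ):ℤ), (((j,m).2 : ℕ):ℤ)⟩) :=
            (hchar (j,m) (Finset.mem_product.mpr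
              ⟨Finset.mem_range.mpr hjlt, Finset.mem_range.mpr hmlt⟩)).mpr rfl
          simp only [hzdvd, hc1, true_and]
          exact if_congr him.symm rfl rfl
        · rw [if_neg (fun h => hz h.1)]
          refine (Finset.sum_eq_zero fun p _ => ?_).symm
          rw [if_neg]
          rintro ⟨h1, -⟩
          apply hz
          have h2 : (↑ℓ:GaussianInt) ∣ z - (α + (ℓ:GaussianInt) * ⟨(p.1:ℤ), (p.2:ℤ)⟩) :=
            dvd_trans (Nat.cast_dvd_cast (dvd_mul_right ℓ d)) h1
          have h3 : (↑ℓ:GaussianInt) ∣ (α + (ℓ:GaussianInt) * ⟨(p.1:ℤ), (p.2:ℤ)⟩) - α := by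
            rw [add_sub_cancel_left]; exact Dvd.intro _ rfl
          have h4 := dvd_add h2 h3
          rwa [sub_add_sub_cancel] at h4
      rw [Finset.sum_congr rfl (fun z _ => hL1 z), Finset.sum_comm]
      have hTp : ∀ p ∈ Finset.range d ×ˢ Finset.range d,
          ‖∑ z ∈ S,
            (if ((ℓ*d : ℕ):GaussianInt) ∣ z - (α + (ℓ:GaussianInt) * ⟨(p.1:ℤ), (p.2:ℤ)⟩)
                ∧ (d:ℤ) ∣ (α + (ℓ:GaussianInt) * (⟨(p.1:ℤ), (p.2:ℤ)⟩:GaussianInt)).im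
              then fAux c k t z else 0)‖
            ≤ K * ((ℓ:ℝ)*(d:ℝ))^2 * (((k:ℝ)^2+1)*(t^2+1)) * X * Real.log X ^ (-(5*B)) := by
        intro p _
        by_cases hcnd : (d:ℤ) ∣ (α + (ℓ:GaussianInt) * (⟨(p.1:ℤ), (p.2:ℤ)⟩:GaussianInt)).im
        · have hsw := hSW k (ℓ*d) (Nat.mul_pos hℓ hd1) (α + (ℓ:GaussianInt) * ⟨(p.1:ℤ), (p.2:ℤ)⟩) t
          have hconv2 : (∑ᶠ z : GaussianInt, if z ≠ 0 ∧ ((ℓ*d : ℕ):GaussianInt) ∣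
                (z - (α + (ℓ:GaussianInt) * ⟨(p.1:ℤ), (p.2:ℤ)⟩)) then fAux c k t z else 0)
              = ∑ z ∈ S, (if ((ℓ*d : ℕ):GaussianInt) ∣
                  (z - (α + (ℓ:GaussianInt) * ⟨(p.1:ℤ), (p.2:ℤ)⟩)) then fAux c k t z else 0) := by
            rw [hconv (fun z => z ≠ 0 ∧ ((ℓ*d : ℕ):GaussianInt) ∣
                (z - (α + (ℓ:GaussianInt) * ⟨(p.1:ℤ), (p.2:ℤ)⟩)))
              (fun z => inferInstance)]
            refine Finset.sum_congr rfl fun z _ => ?_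
            by_cases h0 : z = 0
            · subst h0; simp [hf0]
            · simp [h0]
          simp only [hcnd, and_true]
          calc ‖∑ z ∈ S, (if ((ℓ*d : ℕ):GaussianInt) ∣
                  (z - (α + (ℓ:GaussianInt) * ⟨(p.1:ℤ), (p.2:ℤ)⟩)) then fAux c k t z else 0)‖
              = ‖∑ᶠ z : GaussianInt, if z ≠ 0 ∧ ((ℓ*d : ℕ):GaussianInt) ∣
                  (z - (α + (ℓ:GaussianInt) * ⟨(p.1:ℤ), (p.2:ℤ)⟩)) then fAux c k t z else 0‖ := by
                rw [hconv2]
            _ ≤ K * ((ℓ*d : ℕ):ℝ)^2 * ((k:ℝ)^2+1) * (t^2+1) * X * Real.log X ^ (-(5*B)) := hsw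
            _ = K * ((ℓ:ℝ)*(d:ℝ))^2 * (((k:ℝ)^2+1)*(t^2+1)) * X * Real.log X ^ (-(5*B)) := by
                push_cast; ring
        · simp only [hcnd, and_false, if_false, Finset.sum_const_zero, norm_zero]
          positivity
      calc ‖∑ p ∈ Finset.range d ×ˢ Finset.range d, ∑ z ∈ S,
              (if ((ℓ*d : ℕ):GaussianInt) ∣ z - (α + (ℓ:GaussianInt) * ⟨(p.1:ℤ), (p.2:ℤ)⟩)
                  ∧ (d:ℤ) ∣ (α + (ℓ:GaussianInt) * (⟨(p.1:ℤ), (p.2:ℤ)⟩:GaussianInt)).im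
                then fAux c k t z else 0)‖
          ≤ ∑ p ∈ Finset.range d ×ˢ Finset.range d, ‖∑ z ∈ S,
              (if ((ℓ*d : ℕ):GaussianInt) ∣ z - (α + (ℓ:GaussianInt) * ⟨(p.1:ℤ), (p.2:ℤ)⟩)
                  ∧ (d:ℤ) ∣ (α + (ℓ:GaussianInt) * (⟨(p.1:ℤ), (p.2:ℤ)⟩:GaussianInt)).im
                then fAux c k t z else 0)‖ := norm_sum_le _ _
        _ ≤ ∑ _p ∈ Finset.range d ×ˢ Finset.range d,
              (K * ((ℓ:ℝ)*(d:ℝ))^2 * (((k:ℝ)^2+1)*(t^2+1)) * X * Real.log X ^ (-(5*B))) :=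
            Finset.sum_le_sum hTp
        _ = ((d*d : ℕ):ℝ) *
              (K * ((ℓ:ℝ)*(d:ℝ))^2 * (((k:ℝ)^2+1)*(t^2+1)) * X * Real.log X ^ (-(5*B))) := by
            rw [Finset.sum_const, Finset.card_product, Finset.card_range, nsmul_eq_mul]
        _ = K * (ℓ:ℝ)^2 * (((k:ℝ)^2+1)*(t^2+1)) * X
              * ((d:ℝ)^4 * Real.log X ^ (-(5*B))) := by
            push_cast; ring
        _ ≤ K * (ℓ:ℝ)^2 * (((k:ℝ)^2+1)*(t^2+1)) * X * Real.log X ^ (-B) := by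
            have hpow4 : ((Real.log X ^ B:ℝ))^(4:ℕ) = Real.log X ^ (B*4) := by
              rw [← Real.rpow_natCast (Real.log X ^ B) 4, ← Real.rpow_mul hY.le]
              norm_num
            have hd4 : (d:ℝ)^4 * Real.log X ^ (-(5*B)) ≤ Real.log X ^ (-B) := by
              calc (d:ℝ)^4 * Real.log X ^ (-(5*B))
                  ≤ (Real.log X ^ B)^4 * Real.log X ^ (-(5*B)) :=
                    mul_le_mul_of_nonneg_right (pow_le_pow_left₀ hd0.le hcase 4)
                      (Real.rpow_nonneg hY.le _)
                _ = Real.log X ^ (B*4) * Real.log X ^ (-(5*B)) := by rw [hpow4]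
                _ = Real.log X ^ (B*4 + -(5*B)) := (Real.rpow_add hY _ _).symm
                _ = Real.log X ^ (-B) := by norm_num; ring_nf
            have hKE : (0:ℝ) ≤ K * (ℓ:ℝ)^2 * (((k:ℝ)^2+1)*(t^2+1)) * X := by
              have : (0:ℝ) ≤ K := by linarith
              positivity
            exact mul_le_mul_of_nonneg_left hd4 hKE
        _ ≤ (K * (5 + 5*(2*B)^B)) * (ℓ:ℝ)^2 * (((k:ℝ)^2+1) * (t^2+1)) * X
              * Real.log X ^ (-B) := by
            have hQ : (0:ℝ) ≤ (ℓ:ℝ)^2 * ((((k:ℝ)^2+1)*(t^2+1)) * (X * Real.log X ^ (-B))) := by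
              positivity
            have hco : K ≤ K * (5 + 5*(2*B)^B) := by nlinarith
            nlinarith [mul_le_mul_of_nonneg_right hco hQ]
    · push_neg at hcase
      have hstep1 : ‖∑ z ∈ S, if (↑ℓ:GaussianInt) ∣ z - α ∧ (d:ℤ) ∣ z.im
            then fAux c k t z else 0‖
          ≤ ((S.filter (fun z => (d:ℤ) ∣ z.im ∧ c z ≠ 0)).card : ℝ) := by
        calc ‖∑ z ∈ S, if (↑ℓ:GaussianInt) ∣ z - α ∧ (d:ℤ) ∣ z.im
              then fAux c k t z else 0‖
            ≤ ∑ z ∈ S, ‖if (↑ℓ:GaussianInt) ∣ z - α ∧ (d:ℤ) ∣ z.im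
              then fAux c k t z else 0‖ := norm_sum_le _ _
          _ ≤ ∑ z ∈ S, (if (d:ℤ) ∣ z.im ∧ c z ≠ 0 then (1:ℝ) else 0) := by
              apply Finset.sum_le_sum
              intro z _
              by_cases h1 : (↑ℓ:GaussianInt) ∣ z - α ∧ (d:ℤ) ∣ z.im
              · rw [if_pos h1]
                by_cases h2 : c z = 0
                · rw [hfzero z h2, norm_zero]
                  split_ifs <;> norm_num
                · rw [if_pos ⟨h1.2, h2⟩]; exact hfbound z
              · rw [if_neg h1, norm_zero]
                split_ifs <;> norm_num
          _ = ((S.filter (fun z => (d:ℤ) ∣ z.im ∧ c z ≠ 0)).card : ℝ) := by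
              rw [Finset.sum_boole]
      set M : ℕ := ⌊Real.sqrt X / d⌋₊ with hM
      have hcard : ((S.filter (fun z => (d:ℤ) ∣ z.im ∧ c z ≠ 0)).card : ℝ)
          ≤ (2*Real.sqrt X + 1) * (2*(Real.sqrt X / d) + 1) := by
        have hmaps : ∀ z ∈ S.filter (fun z => (d:ℤ) ∣ z.im ∧ c z ≠ 0),
            ((z.re, z.im / d) : ℤ × ℤ) ∈ Finset.Icc (-(N:ℤ)) (N:ℤ) ×ˢ
              Finset.Icc (-(M:ℤ)) (M:ℤ) := by
          intro z hz
          obtain ⟨-, hdz, hcz⟩ := Finset.mem_filter.mp hz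
          obtain ⟨h1, h2⟩ := habs_le z hcz
          have hre : z.re.natAbs ≤ N := by
            apply Nat.le_floor
            calc ((z.re.natAbs : ℕ) : ℝ) = |(z.re:ℝ)| := by simp [Nat.cast_natAbs]
              _ ≤ Real.sqrt X := h1
          have heq : ((d:ℤ)) * (z.im / d) = z.im := Int.mul_ediv_cancel' hdz
          have himq : (z.im / (d:ℤ)).natAbs ≤ M := by
            apply Nat.le_floor
            have hqR : ((z.im:ℝ)) = (d:ℝ) * ((z.im / (d:ℤ) : ℤ):ℝ) := by
              exact_mod_cast heq.symm
            calc (((z.im / (d:ℤ)).natAbs : ℕ) : ℝ) = |((z.im / (d:ℤ) : ℤ):ℝ)| := by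
                  simp [Nat.cast_natAbs]
              _ = |(z.im:ℝ)| / d := by
                  rw [hqR, abs_mul, abs_of_pos hd0, mul_div_cancel_left₀ _ hd0.ne']
              _ ≤ Real.sqrt X / d := by gcongr
          simp only [Finset.mem_product, Finset.mem_Icc]
          omega
        have hinj : Set.InjOn (fun z : GaussianInt => ((z.re, z.im / d) : ℤ × ℤ))
            (S.filter (fun z => (d:ℤ) ∣ z.im ∧ c z ≠ 0)) := by
          intro z1 hz1 z2 hz2 hzz
          simp only [Finset.coe_filter, Set.mem_setOf_eq] at hz1 hz2
          obtain ⟨-, hd1', -⟩ := hz1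
          obtain ⟨-, hd2', -⟩ := hz2
          have ha : z1.re = z2.re := congrArg Prod.fst hzz
          have hb : z1.im / (d:ℤ) = z2.im / d := congrArg Prod.snd hzz
          have hia : z1.im = z2.im := by
            rw [← Int.mul_ediv_cancel' hd1', ← Int.mul_ediv_cancel' hd2', hb]
          exact Zsqrtd.ext_iff.mpr ⟨ha, hia⟩
        have hcards := Finset.card_le_card_of_injOn _ hmaps hinj
        have hIccN : (Finset.Icc (-(N:ℤ)) (N:ℤ)).card = 2*N+1 := by
          rw [Int.card_Icc]; omega
        have hIccM : (Finset.Icc (-(M:ℤ)) (M:ℤ)).card = 2*M+1 := by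
          rw [Int.card_Icc]; omega
        have hNle : (N:ℝ) ≤ Real.sqrt X := Nat.floor_le hsX0
        have hMle : (M:ℝ) ≤ Real.sqrt X / d := Nat.floor_le (by positivity)
        calc ((S.filter (fun z => (d:ℤ) ∣ z.im ∧ c z ≠ 0)).card : ℝ)
            ≤ ((Finset.Icc (-(N:ℤ)) (N:ℤ) ×ˢ Finset.Icc (-(M:ℤ)) (M:ℤ)).card : ℝ) := by
              exact_mod_cast hcards
          _ = ((2*N+1 : ℕ):ℝ) * ((2*M+1 : ℕ):ℝ) := by
              rw [Finset.card_product, hIccN, hIccM]; push_cast; ring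
          _ ≤ (2*Real.sqrt X + 1) * (2*(Real.sqrt X/d) + 1) := by
              have e1 : ((2*N+1 : ℕ):ℝ) ≤ 2*Real.sqrt X + 1 := by push_cast; linarith
              have e2 : ((2*M+1 : ℕ):ℝ) ≤ 2*(Real.sqrt X/d) + 1 := by push_cast; linarith
              exact mul_le_mul e1 e2 (Nat.cast_nonneg _) (by linarith)
      have hss : Real.sqrt X * Real.sqrt X = X := Real.mul_self_sqrt hX0.le
      have hYB : (0:ℝ) < Real.log X ^ B := Real.rpow_pos_of_pos hY _
      have hfinal : (2*Real.sqrt X + 1) * (2*(Real.sqrt X/d) + 1)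
          ≤ (4 + 5*(2*B)^B) * (X * Real.log X ^ (-B)) := by
        have h4 : X / d ≤ X * Real.log X ^ (-B) := by
          rw [Real.rpow_neg hY.le, div_eq_mul_inv]
          exact mul_le_mul_of_nonneg_left (inv_anti₀ hYB hcase.le) hX0.le
        have hlog : Real.log X ≤ 2*B * X^((2*B)⁻¹) := by
          have h5 := Real.log_le_rpow_div hX0.le (show (0:ℝ) < (2*B)⁻¹ by positivity)
          calc Real.log X ≤ X ^ (2*B)⁻¹ / (2*B)⁻¹ := h5
            _ = 2*B * X^((2*B)⁻¹) := by
                rw [div_eq_mul_inv, inv_inv]; ring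
        have hYb2 : Real.log X ^ B ≤ (2*B)^B * Real.sqrt X := by
          calc Real.log X ^ B ≤ (2*B * X^((2*B)⁻¹))^B :=
                Real.rpow_le_rpow hY.le hlog hB.le
            _ = (2*B)^B * (X^((2*B)⁻¹))^B := Real.mul_rpow (by positivity) (by positivity)
            _ = (2*B)^B * X^((2*B)⁻¹ * B) := by rw [← Real.rpow_mul hX0.le]
            _ = (2*B)^B * X^(1/2 : ℝ) := by
                rw [show ((2*B)⁻¹ * B : ℝ) = 1/2 by field_simp]
            _ = (2*B)^B * Real.sqrt X := by rw [← Real.sqrt_eq_rpow]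
        have h6 : Real.sqrt X ≤ (2*B)^B * (X * Real.log X ^ (-B)) := by
          rw [Real.rpow_neg hY.le,
            show (2*B)^B * (X * (Real.log X ^ B)⁻¹) = ((2*B)^B * X) / (Real.log X ^ B) by
              rw [div_eq_mul_inv]; ring,
            le_div_iff₀ hYB]
          calc Real.sqrt X * Real.log X ^ B ≤ Real.sqrt X * ((2*B)^B * Real.sqrt X) :=
                mul_le_mul_of_nonneg_left hYb2 hsX0
            _ = (2*B)^B * (Real.sqrt X * Real.sqrt X) := by ring
            _ = (2*B)^B * X := by rw [hss]
        have h7 : Real.sqrt X / d ≤ Real.sqrt X := div_le_self hsX0 (by exact_mod_cast hd1)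
        have h8 : (2*Real.sqrt X + 1) * (2*(Real.sqrt X/d) + 1)
            = 4 * ((Real.sqrt X * Real.sqrt X)/d) + 2*(Real.sqrt X/d) + 2*Real.sqrt X + 1 := by
          field_simp
          ring
        calc (2*Real.sqrt X + 1) * (2*(Real.sqrt X/d) + 1)
            ≤ 4 * (X/d) + 5 * Real.sqrt X := by rw [h8, hss]; linarith
          _ ≤ 4*(X*Real.log X^(-B)) + 5*((2*B)^B*(X*Real.log X^(-B))) := by linarith
          _ = (4 + 5*(2*B)^B) * (X * Real.log X ^ (-B)) := by ring
      calc ‖∑ z ∈ S, if (↑ℓ:GaussianInt) ∣ z - α ∧ (d:ℤ) ∣ z.im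
            then fAux c k t z else 0‖
          ≤ ((S.filter (fun z => (d:ℤ) ∣ z.im ∧ c z ≠ 0)).card : ℝ) := hstep1
        _ ≤ (2*Real.sqrt X + 1) * (2*(Real.sqrt X / d) + 1) := hcard
        _ ≤ (4 + 5*(2*B)^B) * (X * Real.log X ^ (-B)) := hfinal
        _ ≤ (K * (5 + 5*(2*B)^B)) * (ℓ:ℝ)^2 * (((k:ℝ)^2+1) * (t^2+1)) * X
              * Real.log X ^ (-B) := by
            have hQ : (0:ℝ) ≤ X * Real.log X ^ (-B) := by positivity
            have hco : (4 + 5*(2*B)^B)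
                ≤ K * (5 + 5*(2*B)^B) * (ℓ:ℝ)^2 * (((k:ℝ)^2+1)*(t^2+1)) := by
              have h9 : (1:ℝ) ≤ K * ((ℓ:ℝ)^2 * (((k:ℝ)^2+1)*(t^2+1))) := by
                have h9a := mul_le_mul hK (mul_le_mul hl2 hE1 zero_le_one (by linarith))
                  (by norm_num) (by linarith)
                linarith
              nlinarith [mul_nonneg (show (0:ℝ) ≤ 5+5*(2*B)^B by linarith)
                (show (0:ℝ) ≤ K * ((ℓ:ℝ)^2 * (((k:ℝ)^2+1)*(t^2+1))) - 1 by linarith)]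
            calc (4 + 5*(2*B)^B) * (X * Real.log X ^ (-B))
                ≤ (K * (5 + 5*(2*B)^B) * (ℓ:ℝ)^2 * (((k:ℝ)^2+1)*(t^2+1)))
                  * (X * Real.log X ^ (-B)) := mul_le_mul_of_nonneg_right hco hQ
              _ = (K * (5 + 5*(2*B)^B)) * (ℓ:ℝ)^2 * (((k:ℝ)^2+1) * (t^2+1)) * X
                  * Real.log X ^ (-B) := by ring
  show ‖∑ᶠ z : GaussianInt,
      if (ℓ : GaussianInt) ∣ (z - α) ∧ Int.gcd z.im e = 1 then fAux c k t z else 0‖ ≤ _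
  rw [hconv (fun z => (↑ℓ:GaussianInt) ∣ z - α ∧ Int.gcd z.im e = 1) (fun z => inferInstance),
    hsplit]
  calc ‖∑ d ∈ e.divisors, ((μ d : ℤ):ℂ) *
          ∑ z ∈ S, (if (↑ℓ:GaussianInt) ∣ z - α ∧ (d:ℤ) ∣ z.im then fAux c k t z else 0)‖
      ≤ ∑ d ∈ e.divisors, ‖((μ d : ℤ):ℂ) *
          ∑ z ∈ S, (if (↑ℓ:GaussianInt) ∣ z - α ∧ (d:ℤ) ∣ z.im then fAux c k t z else 0)‖ :=
        norm_sum_le _ _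
    _ ≤ ∑ d ∈ e.divisors, (K * (5 + 5*(2*B)^B)) * (ℓ:ℝ)^2 * (((k:ℝ)^2+1) * (t^2+1)) * X
            * Real.log X ^ (-B) := by
        apply Finset.sum_le_sum
        intro d hd
        rw [norm_mul]
        have h1 : ‖((μ d : ℤ):ℂ)‖ ≤ 1 := by
          rw [Complex.norm_intCast]
          have h2 : |(μ d : ℤ)| ≤ 1 := by
            by_cases h : Squarefree d
            · rw [ArithmeticFunction.moebius_apply_of_squarefree h, abs_pow, abs_neg, abs_one,
                one_pow]
            · simp [ArithmeticFunction.moebius_eq_zero_of_not_squarefree h]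
          calc |((μ d : ℤ):ℝ)| = ((|(μ d : ℤ)|:ℤ):ℝ) := by push_cast; ring
            _ ≤ 1 := by exact_mod_cast h2
        calc ‖((μ d : ℤ):ℂ)‖ * ‖∑ z ∈ S,
              (if (↑ℓ:GaussianInt) ∣ z - α ∧ (d:ℤ) ∣ z.im then fAux c k t z else 0)‖
            ≤ 1 * ((K * (5 + 5*(2*B)^B)) * (ℓ:ℝ)^2 * (((k:ℝ)^2+1) * (t^2+1)) * X
              * Real.log X ^ (-B)) := by
              apply mul_le_mul h1 (key d hd) (norm_nonneg _)
              norm_num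
          _ = _ := one_mul _
    _ = (e.divisors.card : ℝ) * ((K * (5 + 5*(2*B)^B)) * (ℓ:ℝ)^2 * (((k:ℝ)^2+1) * (t^2+1)) * X
            * Real.log X ^ (-B)) := by rw [Finset.sum_const, nsmul_eq_mul]
    _ ≤ K * (5 + 5 * (2*B)^B) * (e.divisors.card : ℝ) * (ℓ : ℝ) ^ 2 * ((k : ℝ) ^ 2 + 1) *
          (t ^ 2 + 1) * X * Real.log X ^ (-B) := le_of_eq (by ring)
end
end
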